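/- The system 2(x₂ − x₁) + sin(2x₂) − sin(2x₁) − 1.2 = 0 and cos(2x₁) − cos(2x₂) − 0.4 = 0 has at least one solution with (x₁, x₂) ∈ [0, 1] × [0, 1]. -/

import Mathlib

open Real Set

theorem trig_system_exists_solution :
    ∃ x₁ x₂ : ℝ, x₁ ∈ Set.Icc (0 : ℝ) 1 ∧ x₂ ∈ Set.Icc (0 : ℝ) 1 ∧
      2 * (x₂ - x₁) + Real.sin (2 * x₂) - Real.sin (2 * x₁) - 6 / 5 = 0 ∧
      Real.cos (2 * x₁) - Real.cos (2 * x₂) - 2 / 5 = 0 := by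
  -- Step 1: find u ∈ [1/3, 7/20] with sin²u = (3/5 - u)² + 1/25, via IVT
  obtain ⟨u, hu, hgu⟩ : ∃ u ∈ Set.Icc (1/3 : ℝ) (7/20),
      Real.sin u ^ 2 - (3/5 - u)^2 - 1/25 = 0 := by
    have hcont : ContinuousOn (fun u : ℝ => Real.sin u ^ 2 - (3/5 - u)^2 - 1/25)
        (Set.Icc (1/3 : ℝ) (7/20)) := by fun_prop
    have hab : (1/3 : ℝ) ≤ 7/20 := by norm_num
    have hs1 : Real.sin (1/3) ≤ 1/3 := Real.sin_le (by norm_num)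
    have hs1' : 0 ≤ Real.sin (1/3) :=
      Real.sin_nonneg_of_nonneg_of_le_pi (by norm_num) (by linarith [Real.pi_gt_three])
    have h1 : Real.sin (1/3) ^ 2 - (3/5 - 1/3)^2 - 1/25 ≤ 0 := by nlinarith
    have hs2 : (7/20 : ℝ) - (7/20)^3 / 4 < Real.sin (7/20) :=
      by have h : (7/20:ℝ) - (7/20)^3/6 < Real.sin (7/20) := Real.sin_gt_sub_cube (by norm_num); norm_num at h ⊢; linarith
    have h2 : 0 ≤ Real.sin (7/20) ^ 2 - (3/5 - 7/20)^2 - 1/25 := by nlinarith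
    have := intermediate_value_Icc hab hcont (Set.mem_Icc.mpr ⟨h1, h2⟩)
    obtain ⟨u, hu, hgu⟩ := this
    exact ⟨u, hu, hgu⟩
  obtain ⟨hu1, hu2⟩ := hu
  -- basic facts about u
  have hupos : (0:ℝ) < u := by linarith
  have hsinpos : 0 < Real.sin u := Real.sin_pos_of_pos_of_lt_pi hupos
    (by linarith [Real.pi_gt_three])
  have hsinle : Real.sin u ≤ u := Real.sin_le hupos.le
  have hsinne : Real.sin u ≠ 0 := ne_of_gt hsinpos
  set s : ℝ := 1 / (5 * Real.sin u) with hs_def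
  set c : ℝ := (3/5 - u) / Real.sin u with hc_def
  have hspos : 0 < s := by positivity
  have hcnn : 0 ≤ c := div_nonneg (by linarith) hsinpos.le
  have hsc : s ^ 2 + c ^ 2 = 1 := by
    field_simp [hs_def, hc_def]
    rw [hs_def, hc_def]; field_simp
    nlinarith [hgu]
  have hs_le1 : s ≤ 1 := by nlinarith
  -- s is not too small: sin u ≤ u ≤ 7/20 so s ≥ 4/7
  have hs_ge : (4/7 : ℝ) ≤ s := by
    rw [hs_def, le_div_iff₀ (by positivity)]
    nlinarith
  set v : ℝ := Real.arcsin s with hv_def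
  have hsinv : Real.sin v = s := Real.sin_arcsin (by linarith) hs_le1
  have hcosv : Real.cos v = c := by
    rw [hv_def, Real.cos_arcsin]
    have : 1 - s ^ 2 = c ^ 2 := by linarith
    rw [this, Real.sqrt_sq hcnn]
  have hvge : s ≤ v := by
    have h0 : 0 ≤ v := Real.arcsin_nonneg.mpr hspos.le
    calc s = Real.sin v := hsinv.symm
    _ ≤ v := Real.sin_le h0
  have hvle : v ≤ π / 2 := Real.arcsin_le_pi_div_two s
  have hpi : π < 3.15 := Real.pi_lt_d2
  have huv : u ≤ v := by linarith
  refine ⟨(v - u) / 2, (v + u) / 2, ⟨by linarith, by linarith⟩, ⟨by linarith, by linarith⟩,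
    ?_, ?_⟩
  · have e1 : 2 * ((v + u) / 2) = v + u := by ring
    have e2 : 2 * ((v - u) / 2) = v - u := by ring
    rw [e1, e2, Real.sin_add, Real.sin_sub, hcosv]
    have : c * Real.sin u = 3/5 - u := by
      rw [hc_def]; field_simp
    linarith [this]
  · have e1 : 2 * ((v + u) / 2) = v + u := by ring
    have e2 : 2 * ((v - u) / 2) = v - u := by ring
    rw [e1, e2, Real.cos_add, Real.cos_sub, hsinv]
    have : s * Real.sin u = 1/5 := by
      rw [hs_def]; field_simp
    linarith [this]
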